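/- Each of the five-dimensional nilpotent real Lie algebras L_{5,1} (abelian), L_{5,2} (nonzero bracket [e1,e2]=e3), L_{5,8} (nonzero brackets [e1,e2]=e4, [e1,e3]=e5) and L_{5,9} (nonzero brackets [e1,e2]=e3, [e1,e3]=e4, [e2,e3]=e5) has center of dimension at least 2, and consequently admits no contact form. -/

import Mathlib

set_option linter.unnecessarySeqFocus false

noncomputable section

/-- The wedge product of two scalar-valued alternating forms. -/
def wedge {R M : Type*} [CommRing R] [AddCommGroup M] [Module R M] {m n : ℕ}
    (α : M [⋀^Fin m]→ₗ[R] R) (β : M [⋀^Fin n]→ₗ[R] R) : M [⋀^Fin (m + n)]→ₗ[R] R :=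
  (LinearMap.mul' R R).compAlternatingMap ((α.domCoprod β).domDomCongr finSumFinEquiv)

/-- Reindexing of an alternating form along an equality of degrees. -/
def castForm {R M : Type*} [CommRing R] [AddCommGroup M] [Module R M] {m n : ℕ}
    (h : m = n) (α : M [⋀^Fin m]→ₗ[R] R) : M [⋀^Fin n]→ₗ[R] R :=
  α.domDomCongr (finCongr h)

/-- A linear functional, viewed as a `1`-form. -/
def oneForm {R M : Type*} [CommRing R] [AddCommGroup M] [Module R M]
    (f : M →ₗ[R] R) : M [⋀^Fin 1]→ₗ[R] R :=
  AlternatingMap.ofSubsingleton R M R 0 f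


/-- The underlying vector space of the 5-dimensional nilpotent Lie algebra `L51`. -/
def L51 : Type := Fin 5 → ℝ

instance : AddCommGroup L51 := inferInstanceAs (AddCommGroup (Fin 5 → ℝ))
instance : Module ℝ L51 := inferInstanceAs (Module ℝ (Fin 5 → ℝ))

theorem L51.add_apply (x y : L51) (i : Fin 5) : (x + y) i = x i + y i := rfl
theorem L51.smul_apply (t : ℝ) (x : L51) (i : Fin 5) : (t • x) i = t * x i := rfl

/-- The bracket of `L51`: the abelian Lie algebra. -/
def L51.b (x y : Fin 5 → ℝ) : Fin 5 → ℝ := ![0, 0, 0, 0, 0]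

instance : LieRing L51 where
  bracket x y := L51.b x y
  add_lie x y z := by
    show L51.b (x + y) z = L51.b x z + L51.b y z
    funext i; fin_cases i <;> simp [L51.b, L51.add_apply] <;> ring
  lie_add x y z := by
    show L51.b x (y + z) = L51.b x y + L51.b x z
    funext i; fin_cases i <;> simp [L51.b, L51.add_apply] <;> ring
  lie_self x := by
    show L51.b x x = 0
    funext i; fin_cases i <;> simp [L51.b] <;> ring
  leibniz_lie x y z := by
    show L51.b x (L51.b y z) = L51.b (L51.b x y) z + L51.b y (L51.b x z)
    funext i; fin_cases i <;> simp [L51.b, L51.add_apply] <;> ring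

instance : LieAlgebra ℝ L51 where
  lie_smul t x y := by
    show L51.b x (t • y) = t • L51.b x y
    funext i; fin_cases i <;> simp [L51.b, L51.smul_apply] <;> ring

/-- The standard basis `e1, …, e5` of `L51` (indexed by `0, …, 4`). -/
def L51.e (i : Fin 5) : L51 := (Pi.single i 1 : Fin 5 → ℝ)

/-- The dual basis `e^1, …, e^5` of `L51` (indexed by `0, …, 4`). -/
def L51.eps (i : Fin 5) : Module.Dual ℝ L51 where
  toFun x := x i
  map_add' _ _ := rfl
  map_smul' _ _ := rfl

/-- The underlying vector space of the 5-dimensional nilpotent Lie algebra `L52`. -/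
def L52 : Type := Fin 5 → ℝ

instance : AddCommGroup L52 := inferInstanceAs (AddCommGroup (Fin 5 → ℝ))
instance : Module ℝ L52 := inferInstanceAs (Module ℝ (Fin 5 → ℝ))

theorem L52.add_apply (x y : L52) (i : Fin 5) : (x + y) i = x i + y i := rfl
theorem L52.smul_apply (t : ℝ) (x : L52) (i : Fin 5) : (t • x) i = t * x i := rfl

/-- The bracket of `L52`: `[e1,e2] = e3`. -/
def L52.b (x y : Fin 5 → ℝ) : Fin 5 → ℝ := ![0, 0, x 0 * y 1 - x 1 * y 0, 0, 0]

instance : LieRing L52 where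
  bracket x y := L52.b x y
  add_lie x y z := by
    show L52.b (x + y) z = L52.b x z + L52.b y z
    funext i; fin_cases i <;> simp [L52.b, L52.add_apply] <;> ring
  lie_add x y z := by
    show L52.b x (y + z) = L52.b x y + L52.b x z
    funext i; fin_cases i <;> simp [L52.b, L52.add_apply] <;> ring
  lie_self x := by
    show L52.b x x = 0
    funext i; fin_cases i <;> simp [L52.b] <;> ring
  leibniz_lie x y z := by
    show L52.b x (L52.b y z) = L52.b (L52.b x y) z + L52.b y (L52.b x z)
    funext i; fin_cases i <;> simp [L52.b, L52.add_apply] <;> ring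

instance : LieAlgebra ℝ L52 where
  lie_smul t x y := by
    show L52.b x (t • y) = t • L52.b x y
    funext i; fin_cases i <;> simp [L52.b, L52.smul_apply] <;> ring

/-- The standard basis `e1, …, e5` of `L52` (indexed by `0, …, 4`). -/
def L52.e (i : Fin 5) : L52 := (Pi.single i 1 : Fin 5 → ℝ)

/-- The dual basis `e^1, …, e^5` of `L52` (indexed by `0, …, 4`). -/
def L52.eps (i : Fin 5) : Module.Dual ℝ L52 where
  toFun x := x i
  map_add' _ _ := rfl
  map_smul' _ _ := rfl

/-- The underlying vector space of the 5-dimensional nilpotent Lie algebra `L58`. -/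
def L58 : Type := Fin 5 → ℝ

instance : AddCommGroup L58 := inferInstanceAs (AddCommGroup (Fin 5 → ℝ))
instance : Module ℝ L58 := inferInstanceAs (Module ℝ (Fin 5 → ℝ))

theorem L58.add_apply (x y : L58) (i : Fin 5) : (x + y) i = x i + y i := rfl
theorem L58.smul_apply (t : ℝ) (x : L58) (i : Fin 5) : (t • x) i = t * x i := rfl

/-- The bracket of `L58`: `[e1,e2] = e4`, `[e1,e3] = e5`. -/
def L58.b (x y : Fin 5 → ℝ) : Fin 5 → ℝ := ![0, 0, 0, x 0 * y 1 - x 1 * y 0, x 0 * y 2 - x 2 * y 0]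

instance : LieRing L58 where
  bracket x y := L58.b x y
  add_lie x y z := by
    show L58.b (x + y) z = L58.b x z + L58.b y z
    funext i; fin_cases i <;> simp [L58.b, L58.add_apply] <;> ring
  lie_add x y z := by
    show L58.b x (y + z) = L58.b x y + L58.b x z
    funext i; fin_cases i <;> simp [L58.b, L58.add_apply] <;> ring
  lie_self x := by
    show L58.b x x = 0
    funext i; fin_cases i <;> simp [L58.b] <;> ring
  leibniz_lie x y z := by
    show L58.b x (L58.b y z) = L58.b (L58.b x y) z + L58.b y (L58.b x z)
    funext i; fin_cases i <;> simp [L58.b, L58.add_apply] <;> ring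

instance : LieAlgebra ℝ L58 where
  lie_smul t x y := by
    show L58.b x (t • y) = t • L58.b x y
    funext i; fin_cases i <;> simp [L58.b, L58.smul_apply] <;> ring

/-- The standard basis `e1, …, e5` of `L58` (indexed by `0, …, 4`). -/
def L58.e (i : Fin 5) : L58 := (Pi.single i 1 : Fin 5 → ℝ)

/-- The dual basis `e^1, …, e^5` of `L58` (indexed by `0, …, 4`). -/
def L58.eps (i : Fin 5) : Module.Dual ℝ L58 where
  toFun x := x i
  map_add' _ _ := rfl
  map_smul' _ _ := rfl

/-- The underlying vector space of the 5-dimensional nilpotent Lie algebra `L59`. -/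
def L59 : Type := Fin 5 → ℝ

instance : AddCommGroup L59 := inferInstanceAs (AddCommGroup (Fin 5 → ℝ))
instance : Module ℝ L59 := inferInstanceAs (Module ℝ (Fin 5 → ℝ))

theorem L59.add_apply (x y : L59) (i : Fin 5) : (x + y) i = x i + y i := rfl
theorem L59.smul_apply (t : ℝ) (x : L59) (i : Fin 5) : (t • x) i = t * x i := rfl

/-- The bracket of `L59`: `[e1,e2] = e3`, `[e1,e3] = e4`, `[e2,e3] = e5`. -/
def L59.b (x y : Fin 5 → ℝ) : Fin 5 → ℝ := ![0, 0, x 0 * y 1 - x 1 * y 0, x 0 * y 2 - x 2 * y 0, x 1 * y 2 - x 2 * y 1]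

instance : LieRing L59 where
  bracket x y := L59.b x y
  add_lie x y z := by
    show L59.b (x + y) z = L59.b x z + L59.b y z
    funext i; fin_cases i <;> simp [L59.b, L59.add_apply] <;> ring
  lie_add x y z := by
    show L59.b x (y + z) = L59.b x y + L59.b x z
    funext i; fin_cases i <;> simp [L59.b, L59.add_apply] <;> ring
  lie_self x := by
    show L59.b x x = 0
    funext i; fin_cases i <;> simp [L59.b] <;> ring
  leibniz_lie x y z := by
    show L59.b x (L59.b y z) = L59.b (L59.b x y) z + L59.b y (L59.b x z)
    funext i; fin_cases i <;> simp [L59.b, L59.add_apply] <;> ring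

instance : LieAlgebra ℝ L59 where
  lie_smul t x y := by
    show L59.b x (t • y) = t • L59.b x y
    funext i; fin_cases i <;> simp [L59.b, L59.smul_apply] <;> ring

/-- The standard basis `e1, …, e5` of `L59` (indexed by `0, …, 4`). -/
def L59.e (i : Fin 5) : L59 := (Pi.single i 1 : Fin 5 → ℝ)

/-- The dual basis `e^1, …, e^5` of `L59` (indexed by `0, …, 4`). -/
def L59.eps (i : Fin 5) : Module.Dual ℝ L59 where
  toFun x := x i
  map_add' _ _ := rfl
  map_smul' _ _ := rfl



section AuxContact

set_option maxRecDepth 10000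

lemma wedge_apply_eq_zero {R M : Type*} [CommRing R] [AddCommGroup M] [Module R M] {m n : ℕ}
    (α : M [⋀^Fin m]→ₗ[R] R) (β : M [⋀^Fin n]→ₗ[R] R) (v : Fin (m + n) → M)
    (h : ∀ s : Equiv.Perm (Fin m ⊕ Fin n),
      α (fun i => v (finSumFinEquiv (s (Sum.inl i)))) = 0 ∨
      β (fun i => v (finSumFinEquiv (s (Sum.inr i)))) = 0) :
    wedge α β v = 0 := by
  show (LinearMap.mul' R R) (((α.domCoprod β).domDomCongr finSumFinEquiv) v) = 0
  rw [AlternatingMap.domDomCongr_apply, AlternatingMap.domCoprod_apply]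
  rw [MultilinearMap.sum_apply, map_sum]
  refine Finset.sum_eq_zero fun σ _ => ?_
  induction σ using Quotient.inductionOn with
  | h s =>
    rw [AlternatingMap.domCoprod.summand_mk'']
    rcases h s with h0 | h0 <;>
    · simp only [MultilinearMap.smul_apply, MultilinearMap.domDomCongr_apply,
        MultilinearMap.domCoprod_apply, map_zsmul, Function.comp,
        AlternatingMap.coe_multilinearMap]
      rw [h0]
      simp

lemma wedge_sq_eq_zero {M : Type*} [AddCommGroup M] [Module ℝ M] (P : M → Prop)
    (β : M [⋀^Fin 2]→ₗ[ℝ] ℝ) (hβ : ∀ v : Fin 2 → M, (∃ i, P (v i)) → β v = 0)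
    (u : Fin (2 + 2) → M) (hu : ∃ j, P (u j)) : wedge β β u = 0 := by
  apply wedge_apply_eq_zero
  intro s
  obtain ⟨j, hj⟩ := hu
  have key : ∀ x, s.symm (finSumFinEquiv.symm j) = x → finSumFinEquiv (s x) = j := by
    intro x hx; rw [← hx]; simp
  rcases hs : s.symm (finSumFinEquiv.symm j) with i | i
  · left
    exact hβ _ ⟨i, by rw [key (Sum.inl i) hs]; exact hj⟩
  · right
    exact hβ _ ⟨i, by rw [key (Sum.inr i) hs]; exact hj⟩

lemma wedge_one_eq_zero {M : Type*} [AddCommGroup M] [Module ℝ M] (P : M → Prop)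
    (α : M [⋀^Fin 1]→ₗ[ℝ] ℝ) (β : M [⋀^Fin (2+2)]→ₗ[ℝ] ℝ)
    (hβ : ∀ v : Fin (2+2) → M, (∃ i, P (v i)) → β v = 0)
    (u : Fin (1 + (2 + 2)) → M) (a b : Fin (1 + (2 + 2))) (hab : a ≠ b)
    (ha : P (u a)) (hb : P (u b)) : wedge α β u = 0 := by
  apply wedge_apply_eq_zero
  intro s
  have key : ∀ (j : Fin (1 + (2+2))) x, s.symm (finSumFinEquiv.symm j) = x →
      finSumFinEquiv (s x) = j := by
    intro j x hx; rw [← hx]; simp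
  rcases hsa : s.symm (finSumFinEquiv.symm a) with i | i
  · rcases hsb : s.symm (finSumFinEquiv.symm b) with i' | i'
    · exfalso
      have : (Sum.inl i : Fin 1 ⊕ Fin (2+2)) = Sum.inl i' := by
        rw [Subsingleton.elim i i']
      rw [this, ← hsb] at hsa
      exact hab (finSumFinEquiv.symm.injective (s.symm.injective hsa))
    · right
      exact hβ _ ⟨i', by rw [key b (Sum.inr i') hsb]; exact hb⟩
  · right
    exact hβ _ ⟨i, by rw [key a (Sum.inr i) hsa]; exact ha⟩

lemma no_contact_of_two_central {L : Type*} [LieRing L] [LieAlgebra ℝ L]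
    (bas : Module.Basis (Fin 5) ℝ L) (p q : Fin 5) (hpq : p ≠ q)
    (hp : ∀ y : L, ⁅bas p, y⁆ = 0) (hq : ∀ y : L, ⁅bas q, y⁆ = 0)
    (δ : Module.Dual ℝ L → (L [⋀^Fin 2]→ₗ[ℝ] ℝ))
    (hδ : ∀ (α : Module.Dual ℝ L) (x y : L), δ α ![x, y] = -α ⁅x, y⁆) :
    ¬ ∃ Θ : Module.Dual ℝ L, wedge (oneForm Θ) (wedge (δ Θ) (δ Θ)) ≠ 0 := by
  rintro ⟨Θ, hΘ⟩
  apply hΘ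
  set P : L → Prop := fun x => ∀ y : L, ⁅x, y⁆ = 0 with hP
  have hδz : ∀ w : Fin 2 → L, (∃ i, P (w i)) → δ Θ w = 0 := by
    intro w ⟨i, hi⟩
    have hw : w = ![w 0, w 1] := by
      funext k; fin_cases k <;> rfl
    have hbr : ⁅w 0, w 1⁆ = 0 := by
      fin_cases i
      · exact hi (w 1)
      · rw [← lie_skew, neg_eq_zero]; exact hi (w 0)
    rw [hw, hδ, hbr, map_zero, neg_zero]
  have hγ : ∀ u : Fin (2+2) → L, (∃ j, P (u j)) → wedge (δ Θ) (δ Θ) u = 0 :=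
    fun u hu => wedge_sq_eq_zero P (δ Θ) hδz u hu
  apply Module.Basis.ext_alternating bas
  intro v hv
  have hsurj : Function.Surjective v := Finite.injective_iff_surjective.mp hv
  obtain ⟨a, ha⟩ := hsurj p
  obtain ⟨b, hb⟩ := hsurj q
  have hab : a ≠ b := fun h => hpq (by rw [← ha, ← hb, h])
  rw [AlternatingMap.zero_apply]
  exact wedge_one_eq_zero P (oneForm Θ) (wedge (δ Θ) (δ Θ)) hγ
    (fun i => bas (v i)) a b hab (by show P (bas (v a)); rw [ha]; exact hp)
    (by show P (bas (v b)); rw [hb]; exact hq)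

lemma center_finrank_ge {L : Type*} [LieRing L] [LieAlgebra ℝ L] [Module.Finite ℝ L]
    (x y : L) (hx : x ∈ LieAlgebra.center ℝ L) (hy : y ∈ LieAlgebra.center ℝ L)
    (hli : LinearIndependent ℝ ![x, y]) :
    2 ≤ Module.finrank ℝ ↥(LieAlgebra.center ℝ L) := by
  haveI : Module.Finite ℝ ↥(LieAlgebra.center ℝ L) :=
    inferInstanceAs (Module.Finite ℝ ↥((LieAlgebra.center ℝ L).toSubmodule))
  set w : Fin 2 → ↥(LieAlgebra.center ℝ L) := ![⟨x, hx⟩, ⟨y, hy⟩] with hw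
  have hliw : LinearIndependent ℝ w := by
    apply LinearIndependent.of_comp ((LieAlgebra.center ℝ L).toSubmodule.subtype)
    have : ((LieAlgebra.center ℝ L).toSubmodule.subtype ∘ w) = ![x, y] := by
      funext i; fin_cases i <;> rfl
    rw [this]; exact hli
  simpa using hliw.fintype_card_le_finrank


/-- The identity linear equivalence from the pi type to `L51`. -/
def eqvL51 : (Fin 5 → ℝ) ≃ₗ[ℝ] L51 where
  toFun x := x
  invFun x := x
  map_add' _ _ := rfl
  map_smul' _ _ := rfl
  left_inv _ := rfl
  right_inv _ := rfl

/-- The identity linear equivalence from the pi type to `L52`. -/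
def eqvL52 : (Fin 5 → ℝ) ≃ₗ[ℝ] L52 where
  toFun x := x
  invFun x := x
  map_add' _ _ := rfl
  map_smul' _ _ := rfl
  left_inv _ := rfl
  right_inv _ := rfl

/-- The identity linear equivalence from the pi type to `L58`. -/
def eqvL58 : (Fin 5 → ℝ) ≃ₗ[ℝ] L58 where
  toFun x := x
  invFun x := x
  map_add' _ _ := rfl
  map_smul' _ _ := rfl
  left_inv _ := rfl
  right_inv _ := rfl

/-- The identity linear equivalence from the pi type to `L59`. -/
def eqvL59 : (Fin 5 → ℝ) ≃ₗ[ℝ] L59 where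
  toFun x := x
  invFun x := x
  map_add' _ _ := rfl
  map_smul' _ _ := rfl
  left_inv _ := rfl
  right_inv _ := rfl

end AuxContact

/-- Each of the five-dimensional nilpotent real Lie algebras `L_{5,1}`
(abelian), `L_{5,2}` (`[e1,e2]=e3`), `L_{5,8}` (`[e1,e2]=e4`, `[e1,e3]=e5`) and
`L_{5,9}` (`[e1,e2]=e3`, `[e1,e3]=e4`, `[e2,e3]=e5`) has center of dimension at least
`2`, and consequently admits no contact form `Θ` with `Θ ∧ δΘ ∧ δΘ ≠ 0`. Here `δ` is
the Chevalley–Eilenberg differential, determined on `1`-forms by `(δα)(x,y) = −α([x,y])`. -/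
theorem L51_L52_L58_L59_center_ge_two_and_no_contact
    (δ₁ : Module.Dual ℝ L51 → (L51 [⋀^Fin 2]→ₗ[ℝ] ℝ))
    (hδ₁ : ∀ (α : Module.Dual ℝ L51) (x y : L51), δ₁ α ![x, y] = -α ⁅x, y⁆)
    (δ₂ : Module.Dual ℝ L52 → (L52 [⋀^Fin 2]→ₗ[ℝ] ℝ))
    (hδ₂ : ∀ (α : Module.Dual ℝ L52) (x y : L52), δ₂ α ![x, y] = -α ⁅x, y⁆)
    (δ₈ : Module.Dual ℝ L58 → (L58 [⋀^Fin 2]→ₗ[ℝ] ℝ))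
    (hδ₈ : ∀ (α : Module.Dual ℝ L58) (x y : L58), δ₈ α ![x, y] = -α ⁅x, y⁆)
    (δ₉ : Module.Dual ℝ L59 → (L59 [⋀^Fin 2]→ₗ[ℝ] ℝ))
    (hδ₉ : ∀ (α : Module.Dual ℝ L59) (x y : L59), δ₉ α ![x, y] = -α ⁅x, y⁆) :
    (2 ≤ Module.finrank ℝ ↥(LieAlgebra.center ℝ L51) ∧
      ¬ ∃ Θ : Module.Dual ℝ L51, wedge (oneForm Θ) (wedge (δ₁ Θ) (δ₁ Θ)) ≠ 0) ∧
    (2 ≤ Module.finrank ℝ ↥(LieAlgebra.center ℝ L52) ∧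
      ¬ ∃ Θ : Module.Dual ℝ L52, wedge (oneForm Θ) (wedge (δ₂ Θ) (δ₂ Θ)) ≠ 0) ∧
    (2 ≤ Module.finrank ℝ ↥(LieAlgebra.center ℝ L58) ∧
      ¬ ∃ Θ : Module.Dual ℝ L58, wedge (oneForm Θ) (wedge (δ₈ Θ) (δ₈ Θ)) ≠ 0) ∧
    (2 ≤ Module.finrank ℝ ↥(LieAlgebra.center ℝ L59) ∧
      ¬ ∃ Θ : Module.Dual ℝ L59, wedge (oneForm Θ) (wedge (δ₉ Θ) (δ₉ Θ)) ≠ 0) := by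
  have li51 : LinearIndependent ℝ ![(Pi.single 3 1 : Fin 5 → ℝ), Pi.single 4 1] := by
    rw [linearIndependent_fin2]
    constructor
    · intro h
      simpa using congrFun h 4
    · intro a h
      simpa [Pi.smul_apply] using congrFun h 3
  refine ⟨⟨?_, ?_⟩, ⟨?_, ?_⟩, ⟨?_, ?_⟩, ⟨?_, ?_⟩⟩
  -- L51
  · haveI : Module.Finite ℝ L51 := inferInstanceAs (Module.Finite ℝ (Fin 5 → ℝ))
    have hz3 : ∀ z : L51, ⁅z, L51.e 3⁆ = 0 := fun z => by
      show L51.b z (L51.e 3) = (0 : Fin 5 → ℝ)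
      funext i; fin_cases i <;> simp [L51.b, L51.e, Pi.single_apply]
    have hz4 : ∀ z : L51, ⁅z, L51.e 4⁆ = 0 := fun z => by
      show L51.b z (L51.e 4) = (0 : Fin 5 → ℝ)
      funext i; fin_cases i <;> simp [L51.b, L51.e, Pi.single_apply]
    exact center_finrank_ge (L51.e 3) (L51.e 4)
      ((LieModule.mem_maxTrivSubmodule ℝ L51 L51 _).mpr hz3)
      ((LieModule.mem_maxTrivSubmodule ℝ L51 L51 _).mpr hz4) (show LinearIndependent ℝ ![(L51.e 3 : L51), L51.e 4] from li51)
  · have hz3 : ∀ z : L51, ⁅(L51.e 3 : L51), z⁆ = 0 := fun z => by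
      show L51.b (L51.e 3) z = (0 : Fin 5 → ℝ)
      funext i; fin_cases i <;> simp [L51.b, L51.e, Pi.single_apply]
    have hz4 : ∀ z : L51, ⁅(L51.e 4 : L51), z⁆ = 0 := fun z => by
      show L51.b (L51.e 4) z = (0 : Fin 5 → ℝ)
      funext i; fin_cases i <;> simp [L51.b, L51.e, Pi.single_apply]
    exact no_contact_of_two_central (L := L51) ((Pi.basisFun ℝ (Fin 5)).map eqvL51) 3 4
      (by decide)
      (fun y => by rw [Module.Basis.map_apply, Pi.basisFun_apply]; exact hz3 y)
      (fun y => by rw [Module.Basis.map_apply, Pi.basisFun_apply]; exact hz4 y) δ₁ hδ₁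
  -- L52
  · haveI : Module.Finite ℝ L52 := inferInstanceAs (Module.Finite ℝ (Fin 5 → ℝ))
    have hz3 : ∀ z : L52, ⁅z, L52.e 3⁆ = 0 := fun z => by
      show L52.b z (L52.e 3) = (0 : Fin 5 → ℝ)
      funext i; fin_cases i <;> simp [L52.b, L52.e, Pi.single_apply]
    have hz4 : ∀ z : L52, ⁅z, L52.e 4⁆ = 0 := fun z => by
      show L52.b z (L52.e 4) = (0 : Fin 5 → ℝ)
      funext i; fin_cases i <;> simp [L52.b, L52.e, Pi.single_apply]
    exact center_finrank_ge (L52.e 3) (L52.e 4)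
      ((LieModule.mem_maxTrivSubmodule ℝ L52 L52 _).mpr hz3)
      ((LieModule.mem_maxTrivSubmodule ℝ L52 L52 _).mpr hz4) (show LinearIndependent ℝ ![(L52.e 3 : L52), L52.e 4] from li51)
  · have hz3 : ∀ z : L52, ⁅(L52.e 3 : L52), z⁆ = 0 := fun z => by
      show L52.b (L52.e 3) z = (0 : Fin 5 → ℝ)
      funext i; fin_cases i <;> simp [L52.b, L52.e, Pi.single_apply]
    have hz4 : ∀ z : L52, ⁅(L52.e 4 : L52), z⁆ = 0 := fun z => by
      show L52.b (L52.e 4) z = (0 : Fin 5 → ℝ)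
      funext i; fin_cases i <;> simp [L52.b, L52.e, Pi.single_apply]
    exact no_contact_of_two_central (L := L52) ((Pi.basisFun ℝ (Fin 5)).map eqvL52) 3 4
      (by decide)
      (fun y => by rw [Module.Basis.map_apply, Pi.basisFun_apply]; exact hz3 y)
      (fun y => by rw [Module.Basis.map_apply, Pi.basisFun_apply]; exact hz4 y) δ₂ hδ₂
  -- L58
  · haveI : Module.Finite ℝ L58 := inferInstanceAs (Module.Finite ℝ (Fin 5 → ℝ))
    have hz3 : ∀ z : L58, ⁅z, L58.e 3⁆ = 0 := fun z => by
      show L58.b z (L58.e 3) = (0 : Fin 5 → ℝ)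
      funext i; fin_cases i <;> simp [L58.b, L58.e, Pi.single_apply]
    have hz4 : ∀ z : L58, ⁅z, L58.e 4⁆ = 0 := fun z => by
      show L58.b z (L58.e 4) = (0 : Fin 5 → ℝ)
      funext i; fin_cases i <;> simp [L58.b, L58.e, Pi.single_apply]
    exact center_finrank_ge (L58.e 3) (L58.e 4)
      ((LieModule.mem_maxTrivSubmodule ℝ L58 L58 _).mpr hz3)
      ((LieModule.mem_maxTrivSubmodule ℝ L58 L58 _).mpr hz4) (show LinearIndependent ℝ ![(L58.e 3 : L58), L58.e 4] from li51)
  · have hz3 : ∀ z : L58, ⁅(L58.e 3 : L58), z⁆ = 0 := fun z => by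
      show L58.b (L58.e 3) z = (0 : Fin 5 → ℝ)
      funext i; fin_cases i <;> simp [L58.b, L58.e, Pi.single_apply]
    have hz4 : ∀ z : L58, ⁅(L58.e 4 : L58), z⁆ = 0 := fun z => by
      show L58.b (L58.e 4) z = (0 : Fin 5 → ℝ)
      funext i; fin_cases i <;> simp [L58.b, L58.e, Pi.single_apply]
    exact no_contact_of_two_central (L := L58) ((Pi.basisFun ℝ (Fin 5)).map eqvL58) 3 4
      (by decide)
      (fun y => by rw [Module.Basis.map_apply, Pi.basisFun_apply]; exact hz3 y)
      (fun y => by rw [Module.Basis.map_apply, Pi.basisFun_apply]; exact hz4 y) δ₈ hδ₈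
  -- L59
  · haveI : Module.Finite ℝ L59 := inferInstanceAs (Module.Finite ℝ (Fin 5 → ℝ))
    have hz3 : ∀ z : L59, ⁅z, L59.e 3⁆ = 0 := fun z => by
      show L59.b z (L59.e 3) = (0 : Fin 5 → ℝ)
      funext i; fin_cases i <;> simp [L59.b, L59.e, Pi.single_apply]
    have hz4 : ∀ z : L59, ⁅z, L59.e 4⁆ = 0 := fun z => by
      show L59.b z (L59.e 4) = (0 : Fin 5 → ℝ)
      funext i; fin_cases i <;> simp [L59.b, L59.e, Pi.single_apply]
    exact center_finrank_ge (L59.e 3) (L59.e 4)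
      ((LieModule.mem_maxTrivSubmodule ℝ L59 L59 _).mpr hz3)
      ((LieModule.mem_maxTrivSubmodule ℝ L59 L59 _).mpr hz4) (show LinearIndependent ℝ ![(L59.e 3 : L59), L59.e 4] from li51)
  · have hz3 : ∀ z : L59, ⁅(L59.e 3 : L59), z⁆ = 0 := fun z => by
      show L59.b (L59.e 3) z = (0 : Fin 5 → ℝ)
      funext i; fin_cases i <;> simp [L59.b, L59.e, Pi.single_apply]
    have hz4 : ∀ z : L59, ⁅(L59.e 4 : L59), z⁆ = 0 := fun z => by
      show L59.b (L59.e 4) z = (0 : Fin 5 → ℝ)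
      funext i; fin_cases i <;> simp [L59.b, L59.e, Pi.single_apply]
    exact no_contact_of_two_central (L := L59) ((Pi.basisFun ℝ (Fin 5)).map eqvL59) 3 4
      (by decide)
      (fun y => by rw [Module.Basis.map_apply, Pi.basisFun_apply]; exact hz3 y)
      (fun y => by rw [Module.Basis.map_apply, Pi.basisFun_apply]; exact hz4 y) δ₉ hδ₉

end
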